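/- Assume F is continuous with F(0) = 0 and satisfies (H1′): there exist ε with 0 < ε < 4/N and s₁ > 0 such that F(s) − ½s² ≤ −s^{2+ε} for all 0 ≤ s ≤ s₁. Then for every ρ > 0 there exists a nonnegative, Lipschitz, compactly supported function u : ℝᴺ → ℝ with ∫_{ℝᴺ} u² dx = ρ and J(u) := ∫_{ℝᴺ} (½|∇u|² + F(u) − ½u²) dx < 0. -/

import Mathlib

open MeasureTheory Metric Set Filter
open scoped ENNReal NNReal Topology

noncomputable section

set_option maxHeartbeats 1000000 in
/-- Under (H1′) (`F(s) − ½s² ≤ −s^{2+ε}` for small `s ≥ 0`,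
with `0 < ε < 4/N`), for every `ρ > 0` there is a nonnegative, Lipschitz,
compactly supported `u` with `∫ u² = ρ` and `J(u) = ∫ (½|∇u|² + F(u) − ½u²) < 0`. -/
theorem exists_J_negative (N : ℕ) (hN : 2 ≤ N)
    (F : ℝ → ℝ) (hF : Continuous F) (hF0 : F 0 = 0)
    (h1' : ∃ ε s₁ : ℝ, 0 < ε ∧ ε < 4 / (N : ℝ) ∧ 0 < s₁ ∧
      ∀ s : ℝ, 0 ≤ s → s ≤ s₁ → F s - s ^ 2 / 2 ≤ -(s ^ ((2:ℝ) + ε))) :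
    ∀ ρ : ℝ, 0 < ρ →
      ∃ u : EuclideanSpace ℝ (Fin N) → ℝ,
        (∀ x, 0 ≤ u x) ∧ (∃ K : NNReal, LipschitzWith K u) ∧ HasCompactSupport u ∧
        (∫ x, (u x) ^ 2) = ρ ∧
        (∫ x, ((1:ℝ)/2 * ‖gradient u x‖ ^ 2 + F (u x) - (1:ℝ)/2 * (u x) ^ 2)) < 0 := by
  obtain ⟨ε, s₁, hε, hεN, hs₁, hH⟩ := h1'
  intro ρ hρ
  have hNpos : (0:ℝ) < N := by positivity
  -- the volume of the unit ball
  set ω : ℝ := (volume (ball (0 : EuclideanSpace ℝ (Fin N)) 1)).toReal with hω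
  have hωpos : 0 < ω := by
    refine ENNReal.toReal_pos (ne_of_gt (measure_ball_pos _ _ one_pos)) measure_ball_lt_top.ne
  have hvol : ∀ r : ℝ, 0 ≤ r →
      (volume (closedBall (0 : EuclideanSpace ℝ (Fin N)) r)).toReal = r ^ N * ω := by
    intro r hr
    rw [Measure.addHaar_closedBall _ _ hr, ENNReal.toReal_mul,
      ENNReal.toReal_ofReal (by positivity)]
    simp [finrank_euclideanSpace, hω]
  -- choice of the radius R
  have hδ : 0 < 2 - (N:ℝ) * ε / 2 := by
    have h4 : (N:ℝ) * ε < 4 := by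
      have := (lt_div_iff₀ hNpos).mp hεN
      linarith
    linarith
  set c : ℝ := ρ / (2 ^ N * ω) with hc
  have hcpos : 0 < c := by positivity
  obtain ⟨R, hR1, hRbig, hRs⟩ : ∃ R : ℝ, 1 ≤ R ∧
      (2:ℝ) ^ N ≤ c ^ (ε/2) * R ^ (2 - (N:ℝ) * ε / 2) ∧ ρ / (R ^ N * ω) ≤ s₁ ^ 2 := by
    have h1 : Tendsto (fun R : ℝ => c ^ (ε/2) * R ^ (2 - (N:ℝ) * ε / 2)) atTop atTop :=
      (tendsto_rpow_atTop hδ).const_mul_atTop (Real.rpow_pos_of_pos hcpos _)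
    have h2 : Tendsto (fun R : ℝ => ρ / (R ^ N * ω)) atTop (𝓝 0) :=
      Tendsto.div_atTop tendsto_const_nhds ((tendsto_pow_atTop (by omega)).atTop_mul_const hωpos)
    have e1 := h1.eventually_ge_atTop ((2:ℝ) ^ N)
    have e2 := (h2.eventually_lt_const (by positivity : (0:ℝ) < s₁ ^ 2)).mono
      (fun x hx => le_of_lt hx)
    exact ((eventually_ge_atTop 1).and (e1.and e2)).exists.imp
      (fun R h => ⟨h.1, h.2.1, h.2.2⟩)
  have hRpos : 0 < R := lt_of_lt_of_le one_pos hR1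
  -- the profile function φ
  set ψ : ℝ → ℝ := fun s => max 0 (min 1 (2 - R⁻¹ * s)) with hψdef
  set φ : EuclideanSpace ℝ (Fin N) → ℝ := fun x => ψ ‖x‖ with hφdef
  have hψlip : LipschitzWith ‖R⁻¹‖₊ ψ := by
    have hbase : LipschitzWith ‖R⁻¹‖₊ (fun s : ℝ => 2 - R⁻¹ * s) := by
      apply LipschitzWith.of_dist_le_mul
      intro a b
      simp only [Real.dist_eq, coe_nnnorm, Real.norm_eq_abs]
      rw [show (2 - R⁻¹*a) - (2 - R⁻¹*b) = R⁻¹ * (b - a) by ring, abs_mul, abs_sub_comm]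
    exact (hbase.const_min 1).const_max 0
  have hφlip : LipschitzWith (‖R⁻¹‖₊ * 1) φ := hψlip.comp lipschitzWith_one_norm
  have hφ0 : ∀ x : EuclideanSpace ℝ (Fin N), 0 ≤ φ x := fun x => le_max_left _ _
  have hφ1 : ∀ x : EuclideanSpace ℝ (Fin N), φ x ≤ 1 :=
    fun x => max_le zero_le_one (min_le_left _ _)
  have hφeq1 : ∀ x ∈ closedBall (0 : EuclideanSpace ℝ (Fin N)) R, φ x = 1 := by
    intro x hx
    rw [mem_closedBall, dist_zero_right] at hx
    have h1 : R⁻¹ * ‖x‖ ≤ 1 := by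
      rw [← div_eq_inv_mul]
      exact (div_le_one hRpos).mpr hx
    have h2 : (1:ℝ) ≤ 2 - R⁻¹ * ‖x‖ := by linarith
    simp only [hφdef, hψdef]
    rw [min_eq_left h2, max_eq_right zero_le_one]
  have hφsupp : ∀ x : EuclideanSpace ℝ (Fin N), 2 * R < ‖x‖ → φ x = 0 := by
    intro x hx
    have h1 : 2 < R⁻¹ * ‖x‖ := by
      rw [← div_eq_inv_mul, lt_div_iff₀ hRpos]
      linarith
    have h2 : 2 - R⁻¹ * ‖x‖ ≤ 0 := by linarith
    simp only [hφdef, hψdef]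
    rw [min_eq_right (by linarith), max_eq_left h2]
  have hφcont : Continuous φ := hφlip.continuous
  have hφcs : HasCompactSupport φ := by
    apply HasCompactSupport.intro (isCompact_closedBall (0 : EuclideanSpace ℝ (Fin N)) (2*R))
    intro x hx
    rw [mem_closedBall, dist_zero_right, not_le] at hx
    exact hφsupp x hx
  -- the mass of φ²
  set C : ℝ := ∫ x : EuclideanSpace ℝ (Fin N), (φ x) ^ 2 with hC
  have hφsqint : Integrable (fun x : EuclideanSpace ℝ (Fin N) => (φ x) ^ 2) := by
    apply Continuous.integrable_of_hasCompactSupport (by fun_prop)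
    exact hφcs.comp_left (g := fun s : ℝ => s ^ 2) (by norm_num)
  -- indicator helpers
  have hInd_int : ∀ (r b : ℝ),
      Integrable ((closedBall (0 : EuclideanSpace ℝ (Fin N)) r).indicator (fun _ => b)) := by
    intro r b
    rw [integrable_indicator_iff measurableSet_closedBall]
    exact integrableOn_const measure_closedBall_lt_top.ne
  have hInd_val : ∀ (r b : ℝ), 0 ≤ r →
      (∫ x : EuclideanSpace ℝ (Fin N),
        (closedBall (0 : EuclideanSpace ℝ (Fin N)) r).indicator (fun _ => b) x)
      = r ^ N * ω * b := by
    intro r b hr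
    rw [integral_indicator_const b measurableSet_closedBall, smul_eq_mul, measureReal_def, hvol r hr]
  have hC_lb : R ^ N * ω ≤ C := by
    have := integral_mono (hInd_int R 1) hφsqint (fun x => by
      by_cases hx : x ∈ closedBall (0 : EuclideanSpace ℝ (Fin N)) R
      · rw [indicator_of_mem hx, hφeq1 x hx]; norm_num
      · rw [indicator_of_notMem hx]; positivity)
    rwa [hInd_val R 1 hRpos.le, mul_one] at this
  have hC_ub : C ≤ 2 ^ N * R ^ N * ω := by
    have := integral_mono hφsqint (hInd_int (2*R) 1) (fun x => by
      by_cases hx : x ∈ closedBall (0 : EuclideanSpace ℝ (Fin N)) (2*R)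
      · rw [indicator_of_mem hx]
        have := hφ0 x; have := hφ1 x; nlinarith
      · rw [indicator_of_notMem hx]
        rw [mem_closedBall, dist_zero_right, not_le] at hx
        rw [hφsupp x hx]; norm_num)
    rw [hInd_val (2*R) 1 (by positivity), mul_one, mul_pow] at this
    linarith [this]
  have hCpos : 0 < C := lt_of_lt_of_le (by positivity) hC_lb
  -- the amplitude t
  set t : ℝ := Real.sqrt (ρ / C) with ht
  have htpos : 0 < t := Real.sqrt_pos.mpr (by positivity)
  have ht2 : t ^ 2 = ρ / C := Real.sq_sqrt (by positivity)
  have hts₁ : t ≤ s₁ := by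
    have h1 : ρ / C ≤ ρ / (R ^ N * ω) :=
      div_le_div_of_nonneg_left hρ.le (by positivity) hC_lb
    calc t = Real.sqrt (ρ / C) := ht
    _ ≤ Real.sqrt (s₁ ^ 2) := Real.sqrt_le_sqrt (le_trans h1 hRs)
    _ = s₁ := Real.sqrt_sq hs₁.le
  -- the function u
  set u : EuclideanSpace ℝ (Fin N) → ℝ := fun x => t * φ x with hu
  have hu0 : ∀ x, 0 ≤ u x := fun x => mul_nonneg htpos.le (hφ0 x)
  have hulip : LipschitzWith (‖t‖₊ * (‖R⁻¹‖₊ * 1)) u := by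
    exact (lipschitzWith_smul (β := ℝ) t).comp hφlip
  have hucs : HasCompactSupport u := hφcs.mul_left
  have hut : ∀ x, u x ≤ t := fun x => by
    simpa using mul_le_mul_of_nonneg_left (hφ1 x) htpos.le
  have hueq : ∀ x ∈ closedBall (0 : EuclideanSpace ℝ (Fin N)) R, u x = t := by
    intro x hx; simp [hu, hφeq1 x hx]
  -- mass of u
  have hmass : (∫ x : EuclideanSpace ℝ (Fin N), (u x) ^ 2) = ρ := by
    have h : (fun x : EuclideanSpace ℝ (Fin N) => (u x) ^ 2)
        = fun x => t ^ 2 * (φ x) ^ 2 := by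
      funext x; simp [hu]; ring
    rw [h, integral_const_mul, ← hC, ht2, div_mul_cancel₀ _ hCpos.ne']
  -- gradient bounds
  have hgradnorm : ∀ x : EuclideanSpace ℝ (Fin N), ‖gradient u x‖ = ‖fderiv ℝ u x‖ := by
    intro x
    simp only [gradient]
    exact LinearIsometryEquiv.norm_map _ _
  have hgrad_le : ∀ x : EuclideanSpace ℝ (Fin N), ‖gradient u x‖ ≤ t / R := by
    intro x
    rw [hgradnorm x]
    calc ‖fderiv ℝ u x‖ ≤ ((‖t‖₊ * (‖R⁻¹‖₊ * 1) : ℝ≥0) : ℝ) :=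
        norm_fderiv_le_of_lipschitz ℝ hulip
    _ = t / R := by
        push_cast
        rw [Real.norm_eq_abs, Real.norm_eq_abs, abs_of_pos htpos,
          abs_of_pos (inv_pos.mpr hRpos), mul_one, div_eq_mul_inv]
  have hgrad0 : ∀ x : EuclideanSpace ℝ (Fin N),
      x ∉ closedBall (0 : EuclideanSpace ℝ (Fin N)) (2*R) → gradient u x = 0 := by
    intro x hx
    rw [mem_closedBall, dist_zero_right, not_le] at hx
    have hopen : IsOpen {y : EuclideanSpace ℝ (Fin N) | 2*R < ‖y‖} :=
      isOpen_lt continuous_const continuous_norm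
    have hev : u =ᶠ[𝓝 x] (fun _ => (0:ℝ)) := by
      filter_upwards [hopen.mem_nhds hx] with y hy
      simp [hu, hφsupp y hy]
    rw [hev.gradient_eq, gradient_fun_const]
  -- the two integrands
  set A : EuclideanSpace ℝ (Fin N) → ℝ := fun x => (1:ℝ)/2 * ‖gradient u x‖ ^ 2 with hA
  set B : EuclideanSpace ℝ (Fin N) → ℝ := fun x => F (u x) - (1:ℝ)/2 * (u x) ^ 2 with hB
  have hAmeas : AEStronglyMeasurable A volume := by
    have h1 : Measurable (fderiv ℝ u) := measurable_fderiv ℝ u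
    have h2 : gradient u = fun x =>
        (InnerProductSpace.toDual ℝ (EuclideanSpace ℝ (Fin N))).symm (fderiv ℝ u x) := rfl
    have h3 : Measurable (gradient u) := by
      rw [h2]; exact (LinearIsometryEquiv.continuous _).measurable.comp h1
    exact ((h3.norm.pow_const 2).const_mul _).aestronglyMeasurable
  have hA_pt : ∀ x : EuclideanSpace ℝ (Fin N),
      A x ≤ (closedBall (0 : EuclideanSpace ℝ (Fin N)) (2*R)).indicator
        (fun _ => (1:ℝ)/2 * (t/R) ^ 2) x := by
    intro x
    by_cases hx : x ∈ closedBall (0 : EuclideanSpace ℝ (Fin N)) (2*R)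
    · rw [indicator_of_mem hx]
      have h1 := hgrad_le x
      have h0 := norm_nonneg (gradient u x)
      simp only [hA]
      nlinarith
    · rw [indicator_of_notMem hx]
      simp [hA, hgrad0 x hx]
  have hA_nonneg : ∀ x, 0 ≤ A x := fun x => by positivity
  have hA_int : Integrable A := by
    apply Integrable.mono (hInd_int (2*R) ((1:ℝ)/2 * (t/R)^2)) hAmeas
    filter_upwards with x
    rw [Real.norm_eq_abs, abs_of_nonneg (hA_nonneg x), Real.norm_eq_abs]
    exact le_trans (hA_pt x) (le_abs_self _)
  have hA_bd : (∫ x : EuclideanSpace ℝ (Fin N), A x)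
      ≤ (1:ℝ)/2 * (t/R) ^ 2 * (2 ^ N * R ^ N * ω) := by
    have h := integral_mono hA_int (hInd_int (2*R) ((1:ℝ)/2 * (t/R)^2)) hA_pt
    rw [hInd_val (2*R) _ (by positivity), mul_pow] at h
    linarith
  have hucont : Continuous u := hulip.continuous
  have hB_int : Integrable B := by
    apply Continuous.integrable_of_hasCompactSupport (by fun_prop)
    have h : B = (fun s : ℝ => F s - (1:ℝ)/2 * s ^ 2) ∘ u := rfl
    rw [h]
    exact hucs.comp_left (by simp [hF0])
  have hB_pt : ∀ x : EuclideanSpace ℝ (Fin N),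
      B x ≤ (closedBall (0 : EuclideanSpace ℝ (Fin N)) R).indicator
        (fun _ => -(t ^ ((2:ℝ) + ε))) x := by
    intro x
    by_cases hx : x ∈ closedBall (0 : EuclideanSpace ℝ (Fin N)) R
    · rw [indicator_of_mem hx]
      have h1 := hH t htpos.le hts₁
      simp only [hB, hueq x hx]
      linarith
    · rw [indicator_of_notMem hx]
      have h1 := hH (u x) (hu0 x) (le_trans (hut x) hts₁)
      have h2 : (0:ℝ) ≤ (u x) ^ ((2:ℝ) + ε) := Real.rpow_nonneg (hu0 x) _
      simp only [hB]
      linarith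
  have hB_bd : (∫ x : EuclideanSpace ℝ (Fin N), B x)
      ≤ R ^ N * ω * (-(t ^ ((2:ℝ) + ε))) := by
    have h := integral_mono hB_int (hInd_int R (-(t ^ ((2:ℝ) + ε)))) hB_pt
    rwa [hInd_val R _ hRpos.le] at h
  -- the key inequality
  have hkey : (2:ℝ) ^ N ≤ t ^ ε * R ^ 2 := by
    set q : ℝ := ρ / (2 ^ N * R ^ N * ω) with hq
    have hqpos : 0 < q := by positivity
    have htl : Real.sqrt q ≤ t := by
      apply Real.sqrt_le_sqrt
      exact div_le_div_of_nonneg_left hρ.le (by positivity) hC_ub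
    have hsq : (Real.sqrt q) ^ ε = q ^ (ε/2) := by
      rw [Real.sqrt_eq_rpow, ← Real.rpow_mul hqpos.le]
      congr 1; ring
    have h1 : q ^ (ε/2) ≤ t ^ ε := by
      rw [← hsq]
      exact Real.rpow_le_rpow (Real.sqrt_nonneg q) htl hε.le
    have e0 : q = c / R ^ N := by rw [hq, hc, div_div]; ring
    have e1 : q ^ (ε/2) = c ^ (ε/2) / (R ^ N : ℝ) ^ (ε/2) := by
      rw [e0, Real.div_rpow hcpos.le (by positivity)]
    have e2 : ((R : ℝ) ^ N) ^ (ε/2) = R ^ ((N:ℝ) * (ε/2)) := by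
      rw [← Real.rpow_natCast R N, ← Real.rpow_mul hRpos.le]
    have e3 : R ^ (2 - (N:ℝ) * ε / 2) = R ^ (2:ℝ) / R ^ ((N:ℝ) * (ε/2)) := by
      rw [← Real.rpow_sub hRpos]; congr 1; ring
    have e4 : R ^ (2:ℝ) = R ^ 2 := by
      rw [show (2:ℝ) = ((2:ℕ):ℝ) by norm_num, Real.rpow_natCast]
    have hRNε : (0:ℝ) < R ^ ((N:ℝ) * (ε/2)) := Real.rpow_pos_of_pos hRpos _
    calc (2:ℝ) ^ N ≤ c ^ (ε/2) * R ^ (2 - (N:ℝ) * ε / 2) := hRbig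
    _ = q ^ (ε/2) * R ^ 2 := by
        rw [e1, e2, e3, e4]; field_simp
    _ ≤ t ^ ε * R ^ 2 := mul_le_mul_of_nonneg_right h1 (by positivity)
  -- final computation
  have hrpow : t ^ ((2:ℝ) + ε) = t ^ 2 * t ^ ε := by
    rw [Real.rpow_add htpos, show ((2:ℝ)) = ((2:ℕ):ℝ) by norm_num, Real.rpow_natCast]
  have htε : (0:ℝ) < t ^ ε := Real.rpow_pos_of_pos htpos ε
  have hmain : (1:ℝ)/2 * (t/R) ^ 2 * (2 ^ N * R ^ N * ω)
      < t ^ ((2:ℝ) + ε) * (R ^ N * ω) := by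
    rw [hrpow]
    have hstep : (2:ℝ)^N / R^2 ≤ t ^ ε := (div_le_iff₀ (by positivity)).mpr hkey
    have hXpos : (0:ℝ) < t^2 * t^ε * (R^N * ω) := by positivity
    calc (1:ℝ)/2 * (t/R)^2 * (2^N * R^N * ω)
        = ((2:ℝ)^N / R^2) * ((1:ℝ)/2 * t^2 * R^N * ω) := by
          field_simp
    _ ≤ t^ε * ((1:ℝ)/2 * t^2 * R^N * ω) :=
        mul_le_mul_of_nonneg_right hstep (by positivity)
    _ = (1:ℝ)/2 * (t^2 * t^ε * (R^N * ω)) := by ring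
    _ < t^2 * t^ε * (R^N * ω) := by linarith
  refine ⟨u, hu0, ⟨_, hulip⟩, hucs, hmass, ?_⟩
  have hsplit : (∫ x : EuclideanSpace ℝ (Fin N),
      ((1:ℝ)/2 * ‖gradient u x‖ ^ 2 + F (u x) - (1:ℝ)/2 * (u x) ^ 2))
      = (∫ x : EuclideanSpace ℝ (Fin N), A x) + ∫ x : EuclideanSpace ℝ (Fin N), B x := by
    rw [← integral_add hA_int hB_int]
    congr 1; funext x; simp only [hA, hB]; ring
  rw [hsplit]
  have hfin : (1:ℝ)/2 * (t/R) ^ 2 * (2 ^ N * R ^ N * ω)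
      + R ^ N * ω * (-(t ^ ((2:ℝ) + ε))) < 0 := by nlinarith [hmain]
  linarith [add_le_add hA_bd hB_bd]
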